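/- Weighted active-time average identity: let P be a finite set, σ a switching signal with active times τ_p(t), active rates ρ_p(t) = τ_p(t)/t, and strongly persistent modes P₊ := {p : limsup_{t→∞} ρ_p(t) > 0}. Then for any family of constants c_p ∈ ℝ (p ∈ P): limsup_{T→∞} (1/T) max_{t∈[0,T]} Σ_{p∈P} c_p τ_p(t) = limsup_{T→∞} (1/T) max_{t∈[0,T]} Σ_{p∈P₊} c_p τ_p(t) = max{ limsup_{t→∞} Σ_{p∈P₊} c_p ρ_p(t), 0 }. -/

import Mathlib

open Filter MeasureTheory

def PiecewiseConstantOn {P : Type*} (σ : ℝ → P) : Prop :=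
  ∀ T : ℝ, 0 < T → ∃ (n : ℕ) (a : ℕ → ℝ), a 0 = 0 ∧ a n = T ∧
    (∀ i < n, a i < a (i + 1)) ∧
    ∀ i < n, ∀ s ∈ Set.Ico (a i) (a (i + 1)), σ s = σ (a i)

noncomputable def activeTime {P : Type*} [DecidableEq P] (σ : ℝ → P) (p : P)
    (t : ℝ) : ℝ :=
  ∫ s in (0:ℝ)..t, if σ s = p then (1:ℝ) else 0

/- Weighted active-time average identity: for constants `c_p`,
`limsup_T (1/T) max_{t∈[0,T]} Σ_{p∈P} c_p τ_p(t)`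
`= limsup_T (1/T) max_{t∈[0,T]} Σ_{p∈P₊} c_p τ_p(t)`
`= max{ limsup_t Σ_{p∈P₊} c_p ρ_p(t), 0 }`,
where `P₊ = {p : limsup ρ_p > 0}` is the set of strongly persistent modes. -/

lemma aux_int {P : Type*} [DecidableEq P] (σ : ℝ → P) (p : P) :
    ∀ (n : ℕ) (a : ℕ → ℝ), (∀ i < n, a i < a (i + 1)) →
    (∀ i < n, ∀ s ∈ Set.Ico (a i) (a (i + 1)), σ s = σ (a i)) →
    IntervalIntegrable (fun s => if σ s = p then (1:ℝ) else 0) volume (a 0) (a n) := by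
  intro n
  induction n with
  | zero => intro a _ _; simp
  | succ n ih =>
    intro a h1 h2
    have ihn := ih a (fun i hi => h1 i (Nat.lt_succ_of_lt hi))
        (fun i hi => h2 i (Nat.lt_succ_of_lt hi))
    refine ihn.trans ?_
    have hlt := h1 n (Nat.lt_succ_self n)
    rw [intervalIntegrable_iff, Set.uIoc_of_le hlt.le]
    have hne : ∀ᵐ s : ℝ, s ≠ a (n+1) := by
      rw [ae_iff]
      simpa [not_not, Set.setOf_eq_eq_singleton] using
        (measure_singleton (a (n+1)) : volume {a (n+1)} = 0)
    have hc : (fun _ : ℝ => if σ (a n) = p then (1:ℝ) else 0)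
        =ᵐ[volume.restrict (Set.Ioc (a n) (a (n+1)))]
        (fun s => if σ s = p then (1:ℝ) else 0) := by
      filter_upwards [ae_restrict_of_ae hne, ae_restrict_mem measurableSet_Ioc] with s hs hs'
      rw [h2 n (Nat.lt_succ_self n) s ⟨hs'.1.le, lt_of_le_of_ne hs'.2 hs⟩]
    exact (integrableOn_const measure_Ioc_lt_top.ne).congr hc

lemma activeTime_integrable {P : Type*} [DecidableEq P] {σ : ℝ → P}
    (hσ : PiecewiseConstantOn σ) (p : P) {t : ℝ} (ht : 0 ≤ t) :
    IntervalIntegrable (fun s => if σ s = p then (1:ℝ) else 0) volume 0 t := by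
  rcases eq_or_lt_of_le ht with h | h
  · rw [← h]
  · obtain ⟨n, a, h0, hn, h1, h2⟩ := hσ t h
    have := aux_int σ p n a h1 h2
    rwa [h0, hn] at this

lemma activeTime_zero' {P : Type*} [DecidableEq P] (σ : ℝ → P) (p : P) :
    activeTime σ p 0 = 0 := by simp [activeTime]

lemma activeTime_diff {P : Type*} [DecidableEq P] {σ : ℝ → P}
    (hσ : PiecewiseConstantOn σ) (p : P) {s t : ℝ} (hs : 0 ≤ s) (hst : s ≤ t) :
    0 ≤ activeTime σ p t - activeTime σ p s ∧
      activeTime σ p t - activeTime σ p s ≤ t - s := by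
  have ht : (0:ℝ) ≤ t := hs.trans hst
  have hIt := activeTime_integrable hσ p ht
  have hIs := activeTime_integrable hσ p hs
  have hsub : IntervalIntegrable (fun u => if σ u = p then (1:ℝ) else 0) volume s t :=
    hIt.mono_set (by rw [Set.uIcc_of_le hst, Set.uIcc_of_le ht]; exact Set.Icc_subset_Icc hs le_rfl)
  have hdiff : activeTime σ p t - activeTime σ p s
      = ∫ u in s..t, if σ u = p then (1:ℝ) else 0 := by
    rw [activeTime, activeTime, intervalIntegral.integral_interval_sub_left hIt hIs]
  constructor
  · rw [hdiff]
    exact intervalIntegral.integral_nonneg hst (fun u _ => by positivity)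
  · rw [hdiff]
    calc (∫ u in s..t, if σ u = p then (1:ℝ) else 0)
        ≤ ∫ _ in s..t, (1:ℝ) := by
          refine intervalIntegral.integral_mono_on hst hsub intervalIntegrable_const ?_
          intro u _; split <;> norm_num
      _ = t - s := by simp

lemma activeTime_nonneg {P : Type*} [DecidableEq P] {σ : ℝ → P}
    (hσ : PiecewiseConstantOn σ) (p : P) {t : ℝ} (ht : 0 ≤ t) :
    0 ≤ activeTime σ p t := by
  have := (activeTime_diff hσ p le_rfl ht).1
  simpa [activeTime_zero'] using this

lemma activeTime_le {P : Type*} [DecidableEq P] {σ : ℝ → P}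
    (hσ : PiecewiseConstantOn σ) (p : P) {t : ℝ} (ht : 0 ≤ t) :
    activeTime σ p t ≤ t := by
  have := (activeTime_diff hσ p le_rfl ht).2
  simpa [activeTime_zero'] using this

lemma limsup_le_limsup_of_tendsto_sub {u v : ℝ → ℝ}
    (hu : IsCoboundedUnder (· ≤ ·) atTop u)
    (hvb : IsBoundedUnder (· ≤ ·) atTop v) (hvc : IsCoboundedUnder (· ≤ ·) atTop v)
    (h : Tendsto (fun t => u t - v t) atTop (nhds 0)) :
    limsup u atTop ≤ limsup v atTop := by
  refine le_of_forall_pos_le_add fun ε hε => ?_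
  have hev : ∀ᶠ t in atTop, u t ≤ v t + ε := by
    filter_upwards [h.eventually (gt_mem_nhds hε)] with t ht
    linarith
  obtain ⟨b, hb⟩ := hvb
  have hvb' : IsBoundedUnder (· ≤ ·) atTop (fun t => v t + ε) :=
    ⟨b + ε, eventually_map.mpr (by filter_upwards [eventually_map.mp hb] with t ht; exact add_le_add_left ht ε)⟩
  calc limsup u atTop ≤ limsup (fun t => v t + ε) atTop := limsup_le_limsup hev hu hvb'
    _ = limsup v atTop + ε := limsup_add_const atTop v ε ⟨b, hb⟩ hvc

lemma limsup_eq_limsup_of_tendsto_sub {u v : ℝ → ℝ}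
    (hub : IsBoundedUnder (· ≤ ·) atTop u) (huc : IsCoboundedUnder (· ≤ ·) atTop u)
    (hvb : IsBoundedUnder (· ≤ ·) atTop v) (hvc : IsCoboundedUnder (· ≤ ·) atTop v)
    (h : Tendsto (fun t => u t - v t) atTop (nhds 0)) :
    limsup u atTop = limsup v atTop := by
  refine le_antisymm (limsup_le_limsup_of_tendsto_sub huc hvb hvc h)
    (limsup_le_limsup_of_tendsto_sub hvc hub huc ?_)
  have := h.neg
  simpa using this

lemma lemA {g : ℝ → ℝ} {K : ℝ} (hK : 0 ≤ K) (hg0 : g 0 = 0)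
    (hb : ∀ t : ℝ, 0 ≤ t → |g t| ≤ K * t) :
    limsup (fun T : ℝ => (1 / T) * sSup (g '' Set.Icc 0 T)) atTop
      = max (limsup (fun t : ℝ => g t / t) atTop) 0 := by
  set V : ℝ → ℝ := fun T => (1 / T) * sSup (g '' Set.Icc 0 T) with hV
  have hmem : ∀ T : ℝ, 0 ≤ T → ∀ t ∈ Set.Icc (0:ℝ) T, g t ∈ g '' Set.Icc 0 T :=
    fun T hT t ht => Set.mem_image_of_mem g ht
  have hbdd : ∀ T : ℝ, 0 ≤ T → BddAbove (g '' Set.Icc 0 T) := by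
    intro T hT
    refine ⟨K * T, ?_⟩
    rintro x ⟨t, ht, rfl⟩
    calc g t ≤ |g t| := le_abs_self _
      _ ≤ K * t := hb t ht.1
      _ ≤ K * T := mul_le_mul_of_nonneg_left ht.2 hK
  have hM0 : ∀ T : ℝ, 0 ≤ T → 0 ≤ sSup (g '' Set.Icc 0 T) := by
    intro T hT
    have : g 0 ∈ g '' Set.Icc 0 T := hmem T hT 0 ⟨le_rfl, hT⟩
    have := le_csSup (hbdd T hT) this
    rwa [hg0] at this
  have hMK : ∀ T : ℝ, 0 ≤ T → sSup (g '' Set.Icc 0 T) ≤ K * T := by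
    intro T hT
    refine csSup_le ⟨g 0, hmem T hT 0 ⟨le_rfl, hT⟩⟩ ?_
    rintro x ⟨t, ht, rfl⟩
    calc g t ≤ |g t| := le_abs_self _
      _ ≤ K * t := hb t ht.1
      _ ≤ K * T := mul_le_mul_of_nonneg_left ht.2 hK
  have hVev : ∀ᶠ T : ℝ in atTop, 0 ≤ V T ∧ V T ≤ K := by
    filter_upwards [eventually_ge_atTop (1:ℝ)] with T hT
    have hT0 : (0:ℝ) < T := lt_of_lt_of_le one_pos hT
    constructor
    · exact mul_nonneg (by positivity) (hM0 T hT0.le)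
    · calc V T ≤ (1/T) * (K * T) :=
          mul_le_mul_of_nonneg_left (hMK T hT0.le) (by positivity)
        _ = K := by field_simp
  have hVb : IsBoundedUnder (· ≤ ·) atTop V :=
    ⟨K, eventually_map.mpr (hVev.mono fun T h => h.2)⟩
  have hVlb : IsBoundedUnder (· ≥ ·) atTop V :=
    ⟨0, eventually_map.mpr (hVev.mono fun T h => h.1)⟩
  have hVc : IsCoboundedUnder (· ≤ ·) atTop V := hVlb.isCoboundedUnder_le
  have hρev : ∀ᶠ t : ℝ in atTop, -K ≤ g t / t ∧ g t / t ≤ K := by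
    filter_upwards [eventually_ge_atTop (1:ℝ)] with t ht
    have ht0 : (0:ℝ) < t := lt_of_lt_of_le one_pos ht
    have h1 : |g t / t| ≤ K := by
      rw [abs_div, abs_of_pos ht0, div_le_iff₀ ht0]
      exact hb t ht0.le
    exact ⟨neg_le_of_abs_le h1, le_of_abs_le h1⟩
  have hρb : IsBoundedUnder (· ≤ ·) atTop (fun t : ℝ => g t / t) :=
    ⟨K, eventually_map.mpr (hρev.mono fun t h => h.2)⟩
  have hρlb : IsBoundedUnder (· ≥ ·) atTop (fun t : ℝ => g t / t) :=
    ⟨-K, eventually_map.mpr (hρev.mono fun t h => h.1)⟩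
  have hρc : IsCoboundedUnder (· ≤ ·) atTop (fun t : ℝ => g t / t) := hρlb.isCoboundedUnder_le
  set L : ℝ := limsup (fun t : ℝ => g t / t) atTop with hLdef
  refine le_antisymm ?_ ?_
  · -- upper bound
    refine le_of_forall_pos_le_add fun ε hε => ?_
    obtain ⟨t₁, ht₁⟩ := (eventually_atTop).1 (eventually_lt_of_limsup_lt
      (lt_add_of_pos_right L hε) hρb)
    set t₀ : ℝ := max t₁ 1 with ht₀def
    have ht₀1 : (1:ℝ) ≤ t₀ := le_max_right _ _
    have ht₀0 : (0:ℝ) < t₀ := lt_of_lt_of_le one_pos ht₀1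
    set C : ℝ := max (L + ε) 0 with hCdef
    have hC0 : 0 ≤ C := le_max_right _ _
    have key : ∀ᶠ T : ℝ in atTop, V T ≤ C + (K * t₀) * (1 / T) := by
      filter_upwards [eventually_ge_atTop t₀] with T hT
      have hT0 : (0:ℝ) < T := lt_of_lt_of_le ht₀0 hT
      have hMle : sSup (g '' Set.Icc 0 T) ≤ C * T + K * t₀ := by
        refine csSup_le ⟨g 0, hmem T hT0.le 0 ⟨le_rfl, hT0.le⟩⟩ ?_
        rintro x ⟨t, ht, rfl⟩
        rcases le_or_gt t t₀ with h | h
        · have : g t ≤ K * t₀ := by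
            calc g t ≤ |g t| := le_abs_self _
              _ ≤ K * t := hb t ht.1
              _ ≤ K * t₀ := mul_le_mul_of_nonneg_left h hK
          nlinarith [mul_nonneg hC0 hT0.le]
        · have ht' : t₁ ≤ t := le_trans (le_max_left _ _) h.le
          have htpos : (0:ℝ) < t := lt_trans ht₀0 h
          have := ht₁ t ht'
          have hgt : g t ≤ (L + ε) * t := by
            rw [div_lt_iff₀ htpos] at this
            exact this.le
          have h2 : (L + ε) * t ≤ C * t :=
            mul_le_mul_of_nonneg_right (le_max_left _ _) htpos.le
          have h3 : C * t ≤ C * T := mul_le_mul_of_nonneg_left ht.2 hC0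
          nlinarith [mul_nonneg hK ht₀0.le]
      calc V T ≤ (1/T) * (C * T + K * t₀) :=
          mul_le_mul_of_nonneg_left hMle (by positivity)
        _ = C + (K * t₀) * (1 / T) := by field_simp
    have htend : Tendsto (fun T : ℝ => C + (K * t₀) * (1 / T)) atTop (nhds C) := by
      have h0 : Tendsto (fun T : ℝ => (K * t₀) * (1 / T)) atTop (nhds 0) := by
        simpa [one_div] using tendsto_inv_atTop_zero.const_mul (K * t₀)
      simpa using tendsto_const_nhds.add h0
    have hle : limsup V atTop ≤ C :=
      (limsup_le_limsup key hVc htend.isBoundedUnder_le).trans_eq htend.limsup_eq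
    calc limsup V atTop ≤ C := hle
      _ ≤ max L 0 + ε := by
        rcases le_total (L + ε) 0 with h | h
        · rw [hCdef, max_eq_right h]
          have := le_max_right L (0:ℝ)
          linarith
        · calc C = L + ε := max_eq_left h
            _ ≤ max L 0 + ε := add_le_add_left (le_max_left _ _) ε
  · -- lower bound
    refine max_le ?_ ?_
    · refine limsup_le_limsup ?_ hρc hVb
      filter_upwards [eventually_ge_atTop (1:ℝ)] with T hT
      have hT0 : (0:ℝ) < T := lt_of_lt_of_le one_pos hT
      have : g T ≤ sSup (g '' Set.Icc 0 T) :=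
        le_csSup (hbdd T hT0.le) (hmem T hT0.le T ⟨hT0.le, le_rfl⟩)
      calc g T / T = (1/T) * g T := by ring
        _ ≤ V T := mul_le_mul_of_nonneg_left this (by positivity)
    · exact le_limsup_of_frequently_le
        ((hVev.mono fun T h => h.1).frequently) hVb

open Classical in
theorem weighted_activeTime_average_identity {P : Type*} [Fintype P]
    [DecidableEq P] (σ : ℝ → P) (hσ : PiecewiseConstantOn σ) (c : P → ℝ) :
    limsup (fun T : ℝ => (1 / T) *
        sSup ((fun t => ∑ p, c p * activeTime σ p t) '' Set.Icc 0 T)) atTop =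
      limsup (fun T : ℝ => (1 / T) *
        sSup ((fun t => ∑ p,
          if 0 < limsup (fun u => activeTime σ p u / u) atTop then
            c p * activeTime σ p t
          else 0) '' Set.Icc 0 T)) atTop ∧
    limsup (fun T : ℝ => (1 / T) *
        sSup ((fun t => ∑ p,
          if 0 < limsup (fun u => activeTime σ p u / u) atTop then
            c p * activeTime σ p t
          else 0) '' Set.Icc 0 T)) atTop =
      max (limsup (fun t : ℝ => ∑ p,
        if 0 < limsup (fun u => activeTime σ p u / u) atTop then
          c p * (activeTime σ p t / t)
        else 0) atTop) 0 := by
  set K : ℝ := ∑ p, |c p| with hKdef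
  have hK : 0 ≤ K := Finset.sum_nonneg fun p _ => abs_nonneg _
  set F : ℝ → ℝ := fun t => ∑ p, c p * activeTime σ p t with hFdef
  set G : ℝ → ℝ := fun t => ∑ p,
    if 0 < limsup (fun u => activeTime σ p u / u) atTop then
      c p * activeTime σ p t else 0 with hGdef
  have hF0 : F 0 = 0 := by simp [hFdef, activeTime_zero']
  have hG0 : G 0 = 0 := by
    simp only [hGdef, activeTime_zero', mul_zero, ite_self, Finset.sum_const_zero]
  have hFb : ∀ t : ℝ, 0 ≤ t → |F t| ≤ K * t := by
    intro t ht
    calc |F t| ≤ ∑ p, |c p * activeTime σ p t| := Finset.abs_sum_le_sum_abs _ _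
      _ ≤ ∑ p, |c p| * t := by
        refine Finset.sum_le_sum fun p _ => ?_
        rw [abs_mul, abs_of_nonneg (activeTime_nonneg hσ p ht)]
        exact mul_le_mul_of_nonneg_left (activeTime_le hσ p ht) (abs_nonneg _)
      _ = K * t := by rw [hKdef, Finset.sum_mul]
  have hGb : ∀ t : ℝ, 0 ≤ t → |G t| ≤ K * t := by
    intro t ht
    calc |G t| ≤ ∑ p, |if 0 < limsup (fun u => activeTime σ p u / u) atTop then
          c p * activeTime σ p t else 0| := Finset.abs_sum_le_sum_abs _ _
      _ ≤ ∑ p, |c p| * t := by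
        refine Finset.sum_le_sum fun p _ => ?_
        split_ifs with h
        · rw [abs_mul, abs_of_nonneg (activeTime_nonneg hσ p ht)]
          exact mul_le_mul_of_nonneg_left (activeTime_le hσ p ht) (abs_nonneg _)
        · simp [mul_nonneg (abs_nonneg (c p)) ht]
      _ = K * t := by rw [hKdef, Finset.sum_mul]
  -- persistence : non-persistent modes have vanishing rate
  have hρ01 : ∀ p : P, ∀ᶠ u : ℝ in atTop,
      0 ≤ activeTime σ p u / u ∧ activeTime σ p u / u ≤ 1 := by
    intro p
    filter_upwards [eventually_ge_atTop (1:ℝ)] with u hu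
    have hu0 : (0:ℝ) < u := lt_of_lt_of_le one_pos hu
    constructor
    · exact div_nonneg (activeTime_nonneg hσ p hu0.le) hu0.le
    · rw [div_le_one hu0]
      exact activeTime_le hσ p hu0.le
  have hnp : ∀ p : P, ¬ (0 < limsup (fun u => activeTime σ p u / u) atTop) →
      Tendsto (fun u => activeTime σ p u / u) atTop (nhds 0) := by
    intro p hp
    have hub : IsBoundedUnder (· ≤ ·) atTop (fun u => activeTime σ p u / u) :=
      ⟨1, eventually_map.mpr ((hρ01 p).mono fun u h => h.2)⟩
    have hlb : IsBoundedUnder (· ≥ ·) atTop (fun u => activeTime σ p u / u) :=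
      ⟨0, eventually_map.mpr ((hρ01 p).mono fun u h => h.1)⟩
    have hsup_le : limsup (fun u => activeTime σ p u / u) atTop ≤ 0 := not_lt.1 hp
    have hsup_ge : 0 ≤ limsup (fun u => activeTime σ p u / u) atTop :=
      le_limsup_of_frequently_le (((hρ01 p).mono fun u h => h.1).frequently) hub
    have hinf_ge : 0 ≤ liminf (fun u => activeTime σ p u / u) atTop :=
      le_liminf_of_le hub.isCoboundedUnder_ge ((hρ01 p).mono fun u h => h.1)
    have hinf_le : liminf (fun u => activeTime σ p u / u) atTop ≤
        limsup (fun u => activeTime σ p u / u) atTop := liminf_le_limsup hub hlb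
    exact tendsto_of_liminf_eq_limsup (le_antisymm (hinf_le.trans hsup_le) hinf_ge)
      (le_antisymm hsup_le hsup_ge) hub hlb
  -- the difference tends to zero
  have hDtend : Tendsto (fun t => F t / t - G t / t) atTop (nhds 0) := by
    have hD : Tendsto (fun t : ℝ => ∑ p,
        if 0 < limsup (fun u => activeTime σ p u / u) atTop then (0:ℝ)
        else c p * (activeTime σ p t / t)) atTop (nhds 0) := by
      have : Tendsto (fun t : ℝ => ∑ p,
          if 0 < limsup (fun u => activeTime σ p u / u) atTop then (0:ℝ)
          else c p * (activeTime σ p t / t)) atTop (nhds (∑ p : P, (0:ℝ))) := by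
        refine tendsto_finset_sum _ fun p _ => ?_
        by_cases hp : 0 < limsup (fun u => activeTime σ p u / u) atTop
        · simp only [if_pos hp]; exact tendsto_const_nhds
        · simp only [if_neg hp]
          simpa using (hnp p hp).const_mul (c p)
      simpa using this
    refine hD.congr' ?_
    filter_upwards [eventually_ne_atTop (0:ℝ)] with t ht
    have h1 : F t - G t = ∑ p,
        if 0 < limsup (fun u => activeTime σ p u / u) atTop then (0:ℝ)
        else c p * activeTime σ p t := by
      rw [hFdef, hGdef, ← Finset.sum_sub_distrib]
      refine Finset.sum_congr rfl fun p _ => ?_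
      split_ifs with h <;> simp
    rw [← sub_div, h1, Finset.sum_div]
    refine Finset.sum_congr rfl fun p _ => ?_
    split_ifs with h
    · simp
    · rw [mul_div_assoc]
  -- boundedness of the rate functions
  have hFρ : ∀ᶠ t : ℝ in atTop, |F t / t| ≤ K := by
    filter_upwards [eventually_ge_atTop (1:ℝ)] with t ht
    have ht0 : (0:ℝ) < t := lt_of_lt_of_le one_pos ht
    rw [abs_div, abs_of_pos ht0, div_le_iff₀ ht0]
    exact hFb t ht0.le
  have hGρ : ∀ᶠ t : ℝ in atTop, |G t / t| ≤ K := by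
    filter_upwards [eventually_ge_atTop (1:ℝ)] with t ht
    have ht0 : (0:ℝ) < t := lt_of_lt_of_le one_pos ht
    rw [abs_div, abs_of_pos ht0, div_le_iff₀ ht0]
    exact hGb t ht0.le
  have hFub : IsBoundedUnder (· ≤ ·) atTop (fun t => F t / t) :=
    ⟨K, eventually_map.mpr (hFρ.mono fun t h => le_of_abs_le h)⟩
  have hFlb : IsBoundedUnder (· ≥ ·) atTop (fun t => F t / t) :=
    ⟨-K, eventually_map.mpr (hFρ.mono fun t h => neg_le_of_abs_le h)⟩
  have hGub : IsBoundedUnder (· ≤ ·) atTop (fun t => G t / t) :=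
    ⟨K, eventually_map.mpr (hGρ.mono fun t h => le_of_abs_le h)⟩
  have hGlb : IsBoundedUnder (· ≥ ·) atTop (fun t => G t / t) :=
    ⟨-K, eventually_map.mpr (hGρ.mono fun t h => neg_le_of_abs_le h)⟩
  have hFGlim : limsup (fun t => F t / t) atTop = limsup (fun t => G t / t) atTop :=
    limsup_eq_limsup_of_tendsto_sub hFub hFlb.isCoboundedUnder_le hGub
      hGlb.isCoboundedUnder_le hDtend
  have hA : limsup (fun T : ℝ => (1 / T) * sSup (F '' Set.Icc 0 T)) atTop
      = max (limsup (fun t : ℝ => F t / t) atTop) 0 := lemA hK hF0 hFb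
  have hB : limsup (fun T : ℝ => (1 / T) * sSup (G '' Set.Icc 0 T)) atTop
      = max (limsup (fun t : ℝ => G t / t) atTop) 0 := lemA hK hG0 hGb
  have hGstmt : limsup (fun t : ℝ => G t / t) atTop
      = limsup (fun t : ℝ => ∑ p,
          if 0 < limsup (fun u => activeTime σ p u / u) atTop then
            c p * (activeTime σ p t / t) else 0) atTop := by
    refine limsup_congr ?_
    filter_upwards [eventually_ne_atTop (0:ℝ)] with t ht
    rw [hGdef, Finset.sum_div]
    refine Finset.sum_congr rfl fun p _ => ?_
    split_ifs with h
    · rw [mul_div_assoc]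
    · simp
  constructor
  · rw [hA, hB, hFGlim]
  · rw [hB, hGstmt]
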